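/- Let N be a nilpotent real n×n matrix and let k be an orthogonal n×n matrix. Suppose that for every t ∈ ℝ there exist a diagonal matrix D(t) all of whose diagonal entries are 1 or −1, and an upper triangular matrix B(t) all of whose diagonal entries are positive, such that exp(t N)·k = k·D(t)·B(t). Then D(t) is the identity matrix for every t ∈ ℝ; that is, for every t ∈ ℝ there exists an upper triangular matrix B(t) with positive diagonal entries such that exp(t N)·k = k·B(t). -/

import Mathlib

open Filter Topology NormedSpace

/-- If `exp(tN)·k = k·D(t)·B(t)` with `D(t)` diagonal with `±1` entries and `B(t)` upper
triangular with positive diagonal, then `D(t) = 1`; i.e. `exp(tN)·k = k·B(t)` with `B(t)`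
upper triangular with positive diagonal. -/
theorem unipotent_fixed_point_sign_trivial
    {n : ℕ} (N k : Matrix (Fin n) (Fin n) ℝ)
    (hN : ∃ m : ℕ, N ^ m = 0)
    (hk : k * k.transpose = 1)
    (h : ∀ t : ℝ, ∃ D B : Matrix (Fin n) (Fin n) ℝ,
      (∀ i j, i ≠ j → D i j = 0) ∧ (∀ i, D i i = 1 ∨ D i i = -1) ∧
      (∀ i j : Fin n, j < i → B i j = 0) ∧ (∀ i, 0 < B i i) ∧
      exp (t • N) * k = k * D * B) :
    ∀ t : ℝ, ∃ B : Matrix (Fin n) (Fin n) ℝ,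
      (∀ i j : Fin n, j < i → B i j = 0) ∧ (∀ i, 0 < B i i) ∧
      exp (t • N) * k = k * B := by
  intro t
  obtain ⟨D, B, hD, hDsign, hBtri, hBpos, hEq⟩ := h (t / 2)
  -- entries of D * B * D
  have hDB : ∀ i j, (D * B) i j = D i i * B i j := by
    intro i j
    rw [Matrix.mul_apply]
    refine Finset.sum_eq_single i (fun a _ ha => ?_) (fun hi => absurd (Finset.mem_univ i) hi)
    rw [hD i a (Ne.symm ha), zero_mul]
  have hDBD : ∀ i j, (D * B * D) i j = D i i * B i j * D j j := by
    intro i j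
    rw [Matrix.mul_apply]
    rw [Finset.sum_eq_single j (fun a _ ha => by rw [hD a j ha, mul_zero])
      (fun hj => absurd (Finset.mem_univ j) hj), hDB]
  have hDsq : ∀ i, D i i * D i i = 1 := by
    intro i; rcases hDsign i with h1 | h1 <;> rw [h1] <;> norm_num
  refine ⟨D * B * D * B, ?_, ?_, ?_⟩
  · intro i j hji
    rw [Matrix.mul_apply]
    refine Finset.sum_eq_zero fun a _ => ?_
    rcases lt_or_ge a i with hai | hia
    · rw [hDBD, hBtri i a hai, mul_zero, zero_mul, zero_mul]
    · rw [hBtri a j (lt_of_lt_of_le hji hia), mul_zero]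
  · intro i
    have : (D * B * D * B) i i = D i i * B i i * D i i * B i i := by
      rw [Matrix.mul_apply]
      rw [Finset.sum_eq_single i (fun a _ ha => ?_) (fun hi => absurd (Finset.mem_univ i) hi)]
      · rw [hDBD]
      · rcases lt_or_ge a i with hai | hia
        · rw [hDBD, hBtri i a hai, mul_zero, zero_mul, zero_mul]
        · rw [hBtri a i (lt_of_le_of_ne hia (Ne.symm ha)), mul_zero]
    rw [this]
    have hb := hBpos i
    rcases hDsign i with h1 | h1 <;> rw [h1] <;> nlinarith
  · have hhalf : exp (t • N) = exp ((t / 2) • N) * exp ((t / 2) • N) := by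
      have hs : (t / 2) • N + (t / 2) • N = t • N := by rw [← add_smul]; norm_num
      rw [← hs, Matrix.exp_add_of_commute ((t / 2) • N) ((t / 2) • N) (Commute.refl _)]
    rw [hhalf, mul_assoc, hEq, ← mul_assoc, ← mul_assoc, hEq]
    simp only [mul_assoc]
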